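/- Let f : ℝⁿ → ℝⁿ be C¹ with μ(J(x)) ≤ −c < 0 for all x for some matrix measure μ. Then f has exactly one zero x* in ℝⁿ. -/

import Mathlib

open Matrix Filter Set Topology

/-- `N` is a norm on `ℝⁿ`. -/
def IsNorm {n : ℕ} (N : (Fin n → ℝ) → ℝ) : Prop :=
  (∀ v, N v = 0 ↔ v = 0) ∧
  (∀ (c : ℝ) v, N (c • v) = |c| * N v) ∧
  (∀ u v, N (u + v) ≤ N u + N v)

/-- Operator (induced matrix) norm of `A` with respect to the vector norm `N`. -/
noncomputable def opNorm {n : ℕ} (N : (Fin n → ℝ) → ℝ)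
    (A : Matrix (Fin n) (Fin n) ℝ) : ℝ :=
  sSup ((fun v => N (A.mulVec v)) '' {v | N v ≤ 1})

/-- Matrix measure (logarithmic norm): `μ(A) = lim_{h→0⁺} (‖I + hA‖ − 1)/h`. -/
noncomputable def matMeasure {n : ℕ} (N : (Fin n → ℝ) → ℝ)
    (A : Matrix (Fin n) (Fin n) ℝ) : ℝ :=
  limUnder (𝓝[>] (0:ℝ)) (fun h => (opNorm N (1 + h • A) - 1) / h)

/-- The Jacobian matrix of `f` at `x`. -/
noncomputable def jac {n : ℕ} (f : (Fin n → ℝ) → (Fin n → ℝ)) (x : Fin n → ℝ) :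
    Matrix (Fin n) (Fin n) ℝ :=
  LinearMap.toMatrix' (fderiv ℝ f x).toLinearMap

/-- Upper right Dini derivative. -/
noncomputable def diniUpper (φ : ℝ → ℝ) (t : ℝ) : ℝ :=
  limsup (fun h => (φ (t + h) - φ t) / h) (𝓝[>] (0:ℝ))

section Aux
variable {n : ℕ} {N : (Fin n → ℝ) → ℝ}

theorem IsNorm.zero (hN : IsNorm N) : N 0 = 0 := by
  have := hN.2.1 0 0
  simpa using this

theorem IsNorm.neg (hN : IsNorm N) (v : Fin n → ℝ) : N (-v) = N v := by
  have := hN.2.1 (-1) v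
  simpa using this

theorem IsNorm.nonneg (hN : IsNorm N) (v : Fin n → ℝ) : 0 ≤ N v := by
  have h := hN.2.2 v (-v)
  rw [add_neg_cancel, hN.zero, hN.neg] at h
  linarith

theorem IsNorm.sub_le (hN : IsNorm N) (u v : Fin n → ℝ) : N u - N v ≤ N (u - v) := by
  have h := hN.2.2 (u - v) v
  simpa using h

theorem IsNorm.abs_sub_le (hN : IsNorm N) (u v : Fin n → ℝ) : |N u - N v| ≤ N (u - v) := by
  rw [abs_sub_le_iff]
  refine ⟨hN.sub_le u v, ?_⟩
  have := hN.sub_le v u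
  rw [← hN.neg (v - u)] at this
  simpa using this

theorem IsNorm.sum_le (hN : IsNorm N) {ι : Type*} (s : Finset ι) (g : ι → Fin n → ℝ) :
    N (∑ i ∈ s, g i) ≤ ∑ i ∈ s, N (g i) := by
  classical
  induction s using Finset.induction with
  | empty => simp [hN.zero]
  | insert _ _ h ih =>
    rw [Finset.sum_insert h, Finset.sum_insert h]
    exact (hN.2.2 _ _).trans (by linarith)

theorem IsNorm.le_norm (hN : IsNorm N) : ∃ b : ℝ, 0 < b ∧ ∀ v, N v ≤ b * ‖v‖ := by
  classical
  set e : Fin n → (Fin n → ℝ) := fun i => Pi.single i 1 with he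
  refine ⟨(∑ i, N (e i)) + 1, ?_, ?_⟩
  · have : 0 ≤ ∑ i, N (e i) := Finset.sum_nonneg fun i _ => hN.nonneg _
    linarith
  · intro v
    have hv : v = ∑ i, v i • e i := by
      funext j
      rw [Finset.sum_apply]
      simp [he, Pi.single_apply]
    calc N v ≤ ∑ i, N (v i • e i) := by
            conv_lhs => rw [hv]
            exact hN.sum_le _ _
      _ = ∑ i, |v i| * N (e i) := by simp [hN.2.1]
      _ ≤ ∑ i, ‖v‖ * N (e i) := by
            refine Finset.sum_le_sum fun i _ => ?_
            exact mul_le_mul_of_nonneg_right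
              ((Real.norm_eq_abs (v i)) ▸ norm_le_pi_norm v i) (hN.nonneg _)
      _ = (∑ i, N (e i)) * ‖v‖ := by rw [← Finset.mul_sum, mul_comm]
      _ ≤ ((∑ i, N (e i)) + 1) * ‖v‖ := by
            have := norm_nonneg v; nlinarith

theorem IsNorm.continuous (hN : IsNorm N) : Continuous N := by
  obtain ⟨b, hb, hble⟩ := hN.le_norm
  refine (LipschitzWith.of_dist_le_mul (K := b.toNNReal) fun u v => ?_).continuous
  rw [Real.dist_eq, Real.coe_toNNReal b hb.le, dist_eq_norm]
  exact (hN.abs_sub_le u v).trans (hble _)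

theorem IsNorm.norm_le (hN : IsNorm N) (hn : n ≠ 0) :
    ∃ a : ℝ, 0 < a ∧ ∀ v, a * ‖v‖ ≤ N v := by
  haveI : Nonempty (Fin n) := ⟨⟨0, Nat.pos_of_ne_zero hn⟩⟩
  have hsne : (Metric.sphere (0 : Fin n → ℝ) 1).Nonempty :=
    NormedSpace.sphere_nonempty.mpr zero_le_one
  obtain ⟨x₀, hx₀s, hx₀min⟩ :=
    (isCompact_sphere (0 : Fin n → ℝ) 1).exists_isMinOn hsne hN.continuous.continuousOn
  have hx₀norm : ‖x₀‖ = 1 := by simpa using hx₀s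
  have hx₀ne : x₀ ≠ 0 := by intro h; rw [h] at hx₀norm; simp at hx₀norm
  have hm : 0 < N x₀ := lt_of_le_of_ne (hN.nonneg _) (fun h => hx₀ne ((hN.1 x₀).1 h.symm))
  refine ⟨N x₀, hm, fun v => ?_⟩
  rcases eq_or_ne v 0 with rfl | hv
  · simp [hN.zero]
  · have hvn : ‖v‖ ≠ 0 := norm_ne_zero_iff.mpr hv
    set w := ‖v‖⁻¹ • v with hw
    have hws : w ∈ Metric.sphere (0 : Fin n → ℝ) 1 := by
      simp [hw, norm_smul, abs_of_nonneg (inv_nonneg.mpr (norm_nonneg v)),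
        inv_mul_cancel₀ hvn]
    have h1 : N x₀ ≤ N w := hx₀min hws
    have h2 : N v = ‖v‖ * N w := by
      rw [hw, hN.2.1, abs_of_nonneg (inv_nonneg.mpr (norm_nonneg v))]
      field_simp
    rw [h2]
    have := norm_nonneg v
    nlinarith

end Aux

section OpAux
variable {n : ℕ} {N : (Fin n → ℝ) → ℝ}

theorem IsNorm.exists_mulVec_bound (hN : IsNorm N) (hn : n ≠ 0)
    (A : Matrix (Fin n) (Fin n) ℝ) :
    ∃ M : ℝ, 0 ≤ M ∧ ∀ v, N (A.mulVec v) ≤ M * N v := by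
  obtain ⟨b, hb, hble⟩ := hN.le_norm
  obtain ⟨a, ha, hage⟩ := hN.norm_le hn
  set T : (Fin n → ℝ) →L[ℝ] (Fin n → ℝ) := LinearMap.toContinuousLinearMap A.mulVecLin
  refine ⟨b * ‖T‖ / a, by positivity, fun v => ?_⟩
  have h1 : N (A.mulVec v) ≤ b * ‖A.mulVec v‖ := hble _
  have h2 : ‖A.mulVec v‖ ≤ ‖T‖ * ‖v‖ := by
    have := T.le_opNorm v
    simpa [T, Matrix.mulVecLin_apply] using this
  have h3 : ‖v‖ ≤ a⁻¹ * N v := by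
    rw [le_inv_mul_iff₀ ha]
    linarith [hage v]
  have hTn : (0:ℝ) ≤ ‖T‖ := norm_nonneg _
  calc N (A.mulVec v) ≤ b * (‖T‖ * ‖v‖) := h1.trans (by nlinarith)
    _ ≤ b * (‖T‖ * (a⁻¹ * N v)) := by
          nlinarith [mul_le_mul_of_nonneg_left h3 (mul_nonneg hb.le hTn)]
    _ = b * ‖T‖ / a * N v := by field_simp

theorem IsNorm.bddAbove (hN : IsNorm N) (hn : n ≠ 0) (A : Matrix (Fin n) (Fin n) ℝ) :
    BddAbove ((fun v => N (A.mulVec v)) '' {v | N v ≤ 1}) := by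
  obtain ⟨M, hM0, hM⟩ := hN.exists_mulVec_bound hn A
  refine ⟨M, fun y hy => ?_⟩
  obtain ⟨v, hv, rfl⟩ := hy
  exact (hM v).trans (by nlinarith [hN.nonneg v, hv.out])

theorem IsNorm.opNorm_nonneg (hN : IsNorm N) (hn : n ≠ 0) (A : Matrix (Fin n) (Fin n) ℝ) :
    0 ≤ opNorm N A := by
  refine le_csSup (hN.bddAbove hn A) ⟨0, by simp [hN.zero], ?_⟩
  simp [Matrix.mulVec_zero, hN.zero]

theorem IsNorm.opNorm_le (hN : IsNorm N) {K : ℝ}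
    (A : Matrix (Fin n) (Fin n) ℝ) (h : ∀ v, N v ≤ 1 → N (A.mulVec v) ≤ K) :
    opNorm N A ≤ K := by
  refine csSup_le ⟨N (A.mulVec 0), ⟨0, by simp [hN.zero], rfl⟩⟩ ?_
  rintro y ⟨v, hv, rfl⟩
  exact h v hv

theorem IsNorm.le_opNorm (hN : IsNorm N) (hn : n ≠ 0) (A : Matrix (Fin n) (Fin n) ℝ)
    (v : Fin n → ℝ) : N (A.mulVec v) ≤ opNorm N A * N v := by
  rcases eq_or_lt_of_le (hN.nonneg v) with h0 | h0
  · have hv0 : v = 0 := (hN.1 v).1 h0.symm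
    simp [hv0, Matrix.mulVec_zero, hN.zero]
  · set w := (N v)⁻¹ • v with hw
    have hNw : N w = 1 := by
      rw [hw, hN.2.1, abs_of_pos (inv_pos.mpr h0), inv_mul_cancel₀ h0.ne']
    have hmem : N (A.mulVec w) ≤ opNorm N A :=
      le_csSup (hN.bddAbove hn A) ⟨w, le_of_eq hNw, rfl⟩
    have hAw : N (A.mulVec w) = (N v)⁻¹ * N (A.mulVec v) := by
      rw [hw, Matrix.mulVec_smul, hN.2.1, abs_of_pos (inv_pos.mpr h0)]
    rw [hAw] at hmem
    calc N (A.mulVec v) = N v * ((N v)⁻¹ * N (A.mulVec v)) := by field_simp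
      _ ≤ N v * opNorm N A := by nlinarith
      _ = opNorm N A * N v := mul_comm _ _

theorem IsNorm.exists_unit (hN : IsNorm N) (hn : n ≠ 0) : ∃ v : Fin n → ℝ, N v = 1 := by
  have hi : (0 : ℕ) < n := Nat.pos_of_ne_zero hn
  set w : Fin n → ℝ := Pi.single ⟨0, hi⟩ 1 with hw
  have hwne : w ≠ 0 := by
    intro h
    have := congrFun h ⟨0, hi⟩
    simp [hw] at this
  have h0 : 0 < N w := lt_of_le_of_ne (hN.nonneg w) fun h => hwne ((hN.1 w).1 h.symm)
  refine ⟨(N w)⁻¹ • w, ?_⟩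
  rw [hN.2.1, abs_of_pos (inv_pos.mpr h0), inv_mul_cancel₀ h0.ne']

end OpAux

section MatAux
variable {n : ℕ} {N : (Fin n → ℝ) → ℝ}

theorem IsNorm.opNorm_mono (hN : IsNorm N) (hn : n ≠ 0) (A : Matrix (Fin n) (Fin n) ℝ) :
    MonotoneOn (fun h => (opNorm N (1 + h • A) - 1) / h) (Ioi (0:ℝ)) := by
  rintro h₁ (h1m : 0 < h₁) h₂ (h2m : 0 < h₂) hle
  set t := h₁ / h₂ with htdef
  have ht0 : 0 < t := div_pos h1m h2m
  have ht1 : t ≤ 1 := (div_le_one h2m).mpr hle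
  have hth : t * h₂ = h₁ := div_mul_cancel₀ _ h2m.ne'
  have hid : (1 : Matrix (Fin n) (Fin n) ℝ) + h₁ • A
      = (1 - t) • (1 : Matrix (Fin n) (Fin n) ℝ) + t • (1 + h₂ • A) := by
    rw [smul_add, smul_smul, hth, sub_smul, one_smul]
    abel
  have hop2 : 0 ≤ opNorm N (1 + h₂ • A) := hN.opNorm_nonneg hn _
  have bound : opNorm N (1 + h₁ • A) ≤ (1 - t) + t * opNorm N (1 + h₂ • A) := by
    apply hN.opNorm_le
    intro v hv
    have hv0 := hN.nonneg v
    rw [hid, Matrix.add_mulVec, Matrix.smul_mulVec, Matrix.smul_mulVec,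
      Matrix.one_mulVec]
    calc N ((1 - t) • v + t • ((1 + h₂ • A).mulVec v))
        ≤ N ((1 - t) • v) + N (t • ((1 + h₂ • A).mulVec v)) := hN.2.2 _ _
      _ = (1 - t) * N v + t * N ((1 + h₂ • A).mulVec v) := by
          rw [hN.2.1, hN.2.1, abs_of_nonneg (by linarith), abs_of_nonneg ht0.le]
      _ ≤ (1 - t) + t * opNorm N (1 + h₂ • A) := by
          have h1 := hN.le_opNorm hn (1 + h₂ • A) v
          nlinarith [mul_le_mul_of_nonneg_left h1 ht0.le,
            mul_nonneg (mul_nonneg ht0.le hop2) (by linarith : (0:ℝ) ≤ 1 - N v)]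
  simp only
  rw [div_le_div_iff₀ h1m h2m]
  nlinarith [bound, hth]

theorem IsNorm.opNorm_lb (hN : IsNorm N) (hn : n ≠ 0) {A : Matrix (Fin n) (Fin n) ℝ}
    {M : ℝ} (hM : ∀ v, N (A.mulVec v) ≤ M * N v) {h : ℝ} (hh : 0 < h) :
    1 - h * M ≤ opNorm N (1 + h • A) := by
  obtain ⟨v₀, hv₀⟩ := hN.exists_unit hn
  have hsub : v₀ = (1 + h • A).mulVec v₀ - h • A.mulVec v₀ := by
    rw [Matrix.add_mulVec, Matrix.one_mulVec, Matrix.smul_mulVec]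
    abel
  have h1 : N v₀ ≤ N ((1 + h • A).mulVec v₀) + N (h • A.mulVec v₀) := by
    conv_lhs => rw [hsub]
    have := hN.2.2 ((1 + h • A).mulVec v₀) (-(h • A.mulVec v₀))
    rw [hN.neg] at this
    simpa [sub_eq_add_neg] using this
  have h2 : N (h • A.mulVec v₀) = h * N (A.mulVec v₀) := by
    rw [hN.2.1, abs_of_pos hh]
  have h3 : N ((1 + h • A).mulVec v₀) ≤ opNorm N (1 + h • A) := by
    have := hN.le_opNorm hn (1 + h • A) v₀
    rwa [hv₀, mul_one] at this
  have h4 := hM v₀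
  rw [hv₀] at h1 h4
  nlinarith

theorem IsNorm.opNorm_small (hN : IsNorm N) (hn : n ≠ 0) {A : Matrix (Fin n) (Fin n) ℝ}
    {c : ℝ} (hA : matMeasure N A ≤ -c) :
    ∀ ε > 0, ∃ h₀ > 0, ∀ h, 0 < h → h ≤ h₀ →
      opNorm N (1 + h • A) ≤ 1 + h * (-c + ε) := by
  intro ε hε
  set g : ℝ → ℝ := fun h => (opNorm N (1 + h • A) - 1) / h with hg
  obtain ⟨M, hM0, hM⟩ := hN.exists_mulVec_bound hn A
  have hbdd : BddBelow (g '' Ioi 0) := by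
    refine ⟨-M, ?_⟩
    rintro y ⟨h, (hh : 0 < h), rfl⟩
    have := hN.opNorm_lb hn hM hh
    rw [hg]
    rw [le_div_iff₀ hh]
    nlinarith
  have htd : Tendsto g (𝓝[>] (0:ℝ)) (𝓝 (sInf (g '' Ioi 0))) :=
    (hN.opNorm_mono hn A).tendsto_nhdsGT hbdd
  have hmmeq : matMeasure N A = sInf (g '' Ioi 0) := by
    unfold matMeasure
    exact htd.limUnder_eq
  have hlt : sInf (g '' Ioi 0) < -c + ε := by
    rw [← hmmeq]; linarith
  obtain ⟨y, ⟨h₀, (hh₀ : 0 < h₀), rfl⟩, hy⟩ :=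
    exists_lt_of_csInf_lt (Set.Nonempty.image g ⟨1, by norm_num⟩) hlt
  refine ⟨h₀, hh₀, fun h hh hhle => ?_⟩
  have hmono := hN.opNorm_mono hn A hh hh₀ hhle
  have : g h < -c + ε := lt_of_le_of_lt hmono hy
  rw [hg] at this
  simp only at this
  rw [div_lt_iff₀ hh] at this
  linarith

theorem IsNorm.mulVec_lower (hN : IsNorm N) (hn : n ≠ 0) {A : Matrix (Fin n) (Fin n) ℝ}
    {c : ℝ} (hA : matMeasure N A ≤ -c) (v : Fin n → ℝ) :
    c * N v ≤ N (A.mulVec v) := by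
  have key : ∀ ε > 0, (c - ε) * N v ≤ N (A.mulVec v) := by
    intro ε hε
    obtain ⟨h₀, hh₀, hb⟩ := hN.opNorm_small hn hA ε hε
    have hop := hb h₀ hh₀ le_rfl
    have h1 : N (v + h₀ • A.mulVec v) ≤ (1 + h₀ * (-c + ε)) * N v := by
      have heq : v + h₀ • A.mulVec v = (1 + h₀ • A).mulVec v := by
        rw [Matrix.add_mulVec, Matrix.one_mulVec, Matrix.smul_mulVec]
      rw [heq]
      have := hN.le_opNorm hn (1 + h₀ • A) v
      nlinarith [hN.nonneg v]
    have h2 : N v - N (v + h₀ • A.mulVec v) ≤ h₀ * N (A.mulVec v) := by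
      have := hN.sub_le v (v + h₀ • A.mulVec v)
      have heq : v - (v + h₀ • A.mulVec v) = (-h₀) • A.mulVec v := by
        rw [neg_smul]; abel
      rw [heq, hN.2.1, abs_of_neg (by linarith : -h₀ < 0)] at this
      simpa using this
    have := hN.nonneg v
    nlinarith
  rcases eq_or_lt_of_le (hN.nonneg v) with h0 | h0
  · rw [← h0, mul_zero]; exact hN.nonneg _
  · refine le_of_forall_pos_le_add fun ε' hε' => ?_
    have := key (ε' / N v) (by positivity)
    have hd : (c - ε' / N v) * N v = c * N v - ε' := by field_simp
    linarith [hd ▸ this]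

end MatAux

noncomputable def sip {n : ℕ} (N : (Fin n → ℝ) → ℝ) (v w : Fin n → ℝ) : ℝ :=
  limsup (fun h => (N (v + h • w) - N v) / h) (𝓝[>] (0:ℝ))

theorem map_mul_nhdsGT {t : ℝ} (ht : 0 < t) :
    Filter.map (fun h : ℝ => t * h) (𝓝[>] (0:ℝ)) = 𝓝[>] (0:ℝ) := by
  have he := (Homeomorph.mulLeft₀ t ht.ne').isEmbedding.map_nhdsWithin_eq (Ioi 0) 0
  have himg : (fun h : ℝ => t * h) '' Ioi 0 = Ioi 0 := by
    ext x
    constructor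
    · rintro ⟨y, (hy : 0 < y), rfl⟩
      exact mul_pos ht hy
    · intro hx
      exact ⟨x / t, mem_Ioi.mpr (div_pos hx ht), by field_simp⟩
  have hco : ⇑(Homeomorph.mulLeft₀ t ht.ne') = fun h : ℝ => t * h := rfl
  rw [hco] at he
  simpa [himg] using he

section SipAux
variable {n : ℕ} {N : (Fin n → ℝ) → ℝ}

theorem IsNorm.quot_ub (hN : IsNorm N) (v w : Fin n → ℝ) {h : ℝ} (hh : 0 < h) :
    (N (v + h • w) - N v) / h ≤ N w := by
  rw [div_le_iff₀ hh]
  have := hN.2.2 v (h • w)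
  rw [hN.2.1, abs_of_pos hh] at this
  linarith

theorem IsNorm.quot_lb (hN : IsNorm N) (v w : Fin n → ℝ) {h : ℝ} (hh : 0 < h) :
    -N w ≤ (N (v + h • w) - N v) / h := by
  rw [le_div_iff₀ hh]
  have h2 := hN.sub_le v (v + h • w)
  have heq : v - (v + h • w) = (-h) • w := by rw [neg_smul]; abel
  rw [heq, hN.2.1, abs_of_neg (by linarith : -h < 0)] at h2
  nlinarith

theorem IsNorm.ev_quot_ub (hN : IsNorm N) (v w : Fin n → ℝ) :
    ∀ᶠ h in 𝓝[>] (0:ℝ), (N (v + h • w) - N v) / h ≤ N w := by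
  filter_upwards [self_mem_nhdsWithin] with h (hh : 0 < h)
  exact hN.quot_ub v w hh

theorem IsNorm.ev_quot_lb (hN : IsNorm N) (v w : Fin n → ℝ) :
    ∀ᶠ h in 𝓝[>] (0:ℝ), -N w ≤ (N (v + h • w) - N v) / h := by
  filter_upwards [self_mem_nhdsWithin] with h (hh : 0 < h)
  exact hN.quot_lb v w hh

theorem IsNorm.sip_le (hN : IsNorm N) (v w : Fin n → ℝ) : sip N v w ≤ N w :=
  limsup_le_of_le (isCoboundedUnder_le_of_eventually_le _ (hN.ev_quot_lb v w))
    (hN.ev_quot_ub v w)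

theorem IsNorm.neg_le_sip (hN : IsNorm N) (v w : Fin n → ℝ) : -N w ≤ sip N v w :=
  le_limsup_of_frequently_le ((hN.ev_quot_lb v w).frequently) ⟨N w, hN.ev_quot_ub v w⟩

theorem IsNorm.sip_zero (hN : IsNorm N) (v : Fin n → ℝ) : sip N v 0 = 0 := by
  have heq : (fun h : ℝ => (N (v + h • (0 : Fin n → ℝ)) - N v) / h) = fun _ => (0:ℝ) := by
    funext h
    simp
  rw [sip, heq, limsup_const]

theorem IsNorm.sip_add_le (hN : IsNorm N) (v w₁ w₂ : Fin n → ℝ) :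
    sip N v (w₁ + w₂) ≤ sip N v w₁ + sip N v w₂ := by
  set q1 : ℝ → ℝ := fun h => (N (v + h • w₁) - N v) / h with hq1
  set q2 : ℝ → ℝ := fun h => (N (v + h • w₂) - N v) / h with hq2
  set m : ℝ → ℝ := fun h => 2 * h with hm
  have hcomp : ∀ᶠ h in 𝓝[>] (0:ℝ),
      (N (v + h • (w₁ + w₂)) - N v) / h ≤ (q1 ∘ m) h + (q2 ∘ m) h := by
    filter_upwards [self_mem_nhdsWithin] with h (hh : 0 < h)
    have h2h : 0 < 2 * h := by linarith
    have heq : v + h • (w₁ + w₂)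
        = (1/2 : ℝ) • (v + (2*h) • w₁) + (1/2 : ℝ) • (v + (2*h) • w₂) := by
      module
    have htri : N (v + h • (w₁ + w₂))
        ≤ (N (v + (2*h) • w₁) + N (v + (2*h) • w₂)) / 2 := by
      rw [heq]
      have ht := hN.2.2 ((1/2:ℝ) • (v + (2*h) • w₁)) ((1/2:ℝ) • (v + (2*h) • w₂))
      rw [hN.2.1, hN.2.1, abs_of_pos (by norm_num : (0:ℝ) < (1/2:ℝ))] at ht
      linarith
    show _ ≤ (N (v + (2*h) • w₁) - N v) / (2*h) + (N (v + (2*h) • w₂) - N v) / (2*h)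
    rw [← add_div, div_le_div_iff₀ hh h2h]
    nlinarith
  have hb1u := hN.ev_quot_ub v w₁
  have hb1l := hN.ev_quot_lb v w₁
  have hb2u := hN.ev_quot_ub v w₂
  have hb2l := hN.ev_quot_lb v w₂
  have hmmap : Filter.map m (𝓝[>] (0:ℝ)) = 𝓝[>] (0:ℝ) := map_mul_nhdsGT two_pos
  have hc1u : ∀ᶠ h in 𝓝[>] (0:ℝ), (q1 ∘ m) h ≤ N w₁ := by
    filter_upwards [self_mem_nhdsWithin] with h (hh : 0 < h)
    exact hN.quot_ub v w₁ (by simp [hm]; linarith)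
  have hc1l : ∀ᶠ h in 𝓝[>] (0:ℝ), -N w₁ ≤ (q1 ∘ m) h := by
    filter_upwards [self_mem_nhdsWithin] with h (hh : 0 < h)
    exact hN.quot_lb v w₁ (by simp [hm]; linarith)
  have hc2u : ∀ᶠ h in 𝓝[>] (0:ℝ), (q2 ∘ m) h ≤ N w₂ := by
    filter_upwards [self_mem_nhdsWithin] with h (hh : 0 < h)
    exact hN.quot_ub v w₂ (by simp [hm]; linarith)
  have hc2l : ∀ᶠ h in 𝓝[>] (0:ℝ), -N w₂ ≤ (q2 ∘ m) h := by
    filter_upwards [self_mem_nhdsWithin] with h (hh : 0 < h)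
    exact hN.quot_lb v w₂ (by simp [hm]; linarith)
  have step1 : sip N v (w₁ + w₂) ≤ limsup (fun h => (q1 ∘ m) h + (q2 ∘ m) h) (𝓝[>] (0:ℝ)) := by
    refine limsup_le_limsup hcomp ?_ ?_
    · exact isCoboundedUnder_le_of_eventually_le _ (hN.ev_quot_lb v (w₁ + w₂))
    · refine ⟨N w₁ + N w₂, eventually_map.2 ?_⟩
      filter_upwards [hc1u, hc2u] with h h1 h2
      simp only [Function.comp] at *
      linarith
  have step2 : limsup (fun h => (q1 ∘ m) h + (q2 ∘ m) h) (𝓝[>] (0:ℝ))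
      ≤ limsup (q1 ∘ m) (𝓝[>] (0:ℝ)) + limsup (q2 ∘ m) (𝓝[>] (0:ℝ)) := by
    exact limsup_add_le ⟨-N w₁, hc1l⟩ ⟨N w₁, hc1u⟩
      (isCoboundedUnder_le_of_eventually_le _ hc2l) ⟨N w₂, hc2u⟩
  have key : ∀ q : ℝ → ℝ, limsup (q ∘ m) (𝓝[>] (0:ℝ)) = limsup q (𝓝[>] (0:ℝ)) := by
    intro q
    simp only [Filter.limsup]
    rw [← Filter.map_map, hmmap]
  rw [key q1, key q2] at step2
  exact step1.trans step2

theorem IsNorm.sip_lip (hN : IsNorm N) (v w w' : Fin n → ℝ) :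
    sip N v w' ≤ sip N v w + N (w' - w) := by
  have := hN.sip_add_le v w (w' - w)
  rw [add_sub_cancel] at this
  exact this.trans (by linarith [hN.sip_le v (w' - w)])

end SipAux

section SipMat
variable {n : ℕ} {N : (Fin n → ℝ) → ℝ}

theorem IsNorm.sip_smul_mulVec (hN : IsNorm N) (hn : n ≠ 0)
    {A : Matrix (Fin n) (Fin n) ℝ} {c : ℝ} (hA : matMeasure N A ≤ -c)
    (v : Fin n → ℝ) {t : ℝ} (ht : 0 < t) :
    sip N v (t • A.mulVec v) ≤ t * (-c * N v) := by
  have key : ∀ ε > 0, sip N v (t • A.mulVec v) ≤ t * ((-c + ε) * N v) := by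
    intro ε hε
    obtain ⟨h₀, hh₀, hb⟩ := hN.opNorm_small hn hA ε hε
    refine limsup_le_of_le
      (isCoboundedUnder_le_of_eventually_le _ (hN.ev_quot_lb v (t • A.mulVec v))) ?_
    have hmem : Ioo (0:ℝ) (h₀ / t) ∈ 𝓝[>] (0:ℝ) :=
      Ioo_mem_nhdsGT_of_mem ⟨le_rfl, by positivity⟩
    filter_upwards [hmem] with h hh
    obtain ⟨hh0, hhlt⟩ := hh
    have hht : 0 < h * t := mul_pos hh0 ht
    have hhle : h * t ≤ h₀ := by
      rw [← le_div_iff₀ ht]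
      exact hhlt.le
    have heq : v + h • (t • A.mulVec v) = (1 + (h * t) • A).mulVec v := by
      rw [Matrix.add_mulVec, Matrix.one_mulVec, Matrix.smul_mulVec, smul_smul]
    have hop := hb (h * t) hht hhle
    have h1 : N (v + h • (t • A.mulVec v)) ≤ (1 + (h * t) * (-c + ε)) * N v := by
      rw [heq]
      have := hN.le_opNorm hn (1 + (h * t) • A) v
      nlinarith [hN.nonneg v]
    rw [div_le_iff₀ hh0]
    nlinarith [hN.nonneg v]
  rcases eq_or_lt_of_le (hN.nonneg v) with h0 | h0
  · have := key 1 one_pos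
    rw [← h0] at this ⊢
    simpa using this
  · refine le_of_forall_pos_le_add fun ε' hε' => ?_
    have hkey := key (ε' / (t * N v)) (by positivity)
    have : t * (-c + ε' / (t * N v)) * N v = t * (-c * N v) + ε' := by
      field_simp
    nlinarith [hkey]

theorem IsNorm.sip_mulVec (hN : IsNorm N) (hn : n ≠ 0)
    {A : Matrix (Fin n) (Fin n) ℝ} {c : ℝ} (hA : matMeasure N A ≤ -c)
    (v : Fin n → ℝ) : sip N v (A.mulVec v) ≤ -c * N v := by
  have := hN.sip_smul_mulVec hn hA v one_pos
  simpa using this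

end SipMat

theorem map_add_nhdsGT (x : ℝ) :
    Filter.map (fun h : ℝ => x + h) (𝓝[>] (0:ℝ)) = 𝓝[>] x := by
  have he := (Homeomorph.addLeft x).isEmbedding.map_nhdsWithin_eq (Ioi 0) 0
  have himg : (fun h : ℝ => x + h) '' Ioi 0 = Ioi x := by
    ext z
    constructor
    · rintro ⟨y, (hy : 0 < y), rfl⟩
      simpa using hy
    · intro hz
      exact ⟨z - x, by simpa [sub_pos] using hz, by ring⟩
  have hco : ⇑(Homeomorph.addLeft x) = fun h : ℝ => x + h := rfl
  rw [hco] at he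
  simpa [himg] using he

section Main
variable {n : ℕ} {N : (Fin n → ℝ) → ℝ}

theorem jac_mulVec {n : ℕ} (f : (Fin n → ℝ) → (Fin n → ℝ)) (z u : Fin n → ℝ) :
    (jac f z).mulVec u = fderiv ℝ f z u := by
  rw [jac, ← Matrix.toLin'_apply, Matrix.toLin'_toMatrix']
  rfl

theorem contraction (hN : IsNorm N) (hn : n ≠ 0)
    {f : (Fin n → ℝ) → (Fin n → ℝ)} (hf : ContDiff ℝ 1 f)
    {c : ℝ} (hc : 0 < c) (hμ : ∀ x, matMeasure N (jac f x) ≤ -c) (x y : Fin n → ℝ) :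
    c * N (x - y) ≤ N (f x - f y) := by
  obtain ⟨b, hb, hble⟩ := hN.le_norm
  set u := x - y with hu
  set g : ℝ → Fin n → ℝ := fun s => f (y + s • u) with hg
  set η : ℝ → ℝ := fun s => sip N u (g s - f y) + c * s * N u with hη
  -- differentiability of g
  have hdiff : ∀ s : ℝ, HasDerivAt g (fderiv ℝ f (y + s • u) u) s := by
    intro s
    have h1 : HasDerivAt (fun s : ℝ => y + s • u) u s := by
      simpa using ((hasDerivAt_id s).smul_const u).const_add y
    exact ((hf.differentiable one_ne_zero (y + s • u)).hasFDerivAt).comp_hasDerivAt s h1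
  -- sip is Lipschitz in second argument
  have hsipLip : ∀ w w' : Fin n → ℝ, |sip N u w - sip N u w'| ≤ N (w - w') := by
    intro w w'
    rw [abs_sub_le_iff]
    constructor
    · linarith [hN.sip_lip u w' w]
    · have := hN.sip_lip u w w'
      rw [← hN.neg (w' - w)] at this
      simp only [neg_sub] at this
      linarith
  -- continuity of η
  have hηc : Continuous η := by
    have hgc : Continuous g := hf.continuous.comp (by continuity)
    have hL : LipschitzWith b.toNNReal (fun w => sip N u w) := by
      refine LipschitzWith.of_dist_le_mul fun w w' => ?_
      rw [Real.dist_eq, Real.coe_toNNReal b hb.le, dist_eq_norm]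
      exact (hsipLip w w').trans (hble _)
    exact (hL.continuous.comp (hgc.sub continuous_const)).add (by continuity)
  -- Dini derivative bound
  have hslope : ∀ s : ℝ,
      (∀ᶠ h in 𝓝[>] (0:ℝ),
        (η (s + h) - η s) / h ≤ N (g (s + h) - g s - h • fderiv ℝ f (y + s • u) u) / h) ∧
      Tendsto (fun h => N (g (s + h) - g s - h • fderiv ℝ f (y + s • u) u) / h)
        (𝓝[>] (0:ℝ)) (𝓝 0) := by
    intro s
    set z := y + s • u with hz
    set d : Fin n → ℝ := fderiv ℝ f z u with hd
    constructor
    · filter_upwards [self_mem_nhdsWithin] with h (hh : 0 < h)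
      have s1 : sip N u (g (s + h) - f y) ≤ sip N u (g s - f y) + sip N u (g (s + h) - g s) := by
        have := hN.sip_add_le u (g s - f y) (g (s + h) - g s)
        rw [show g s - f y + (g (s + h) - g s) = g (s + h) - f y by abel] at this
        exact this
      have s2 : sip N u (g (s + h) - g s) ≤ sip N u (h • d) + N (g (s + h) - g s - h • d) :=
        hN.sip_lip u (h • d) (g (s + h) - g s)
      have s3 : sip N u (h • d) ≤ h * (-c * N u) := by
        have hjd : (jac f z).mulVec u = d := jac_mulVec f z u
        have := hN.sip_smul_mulVec hn (hμ z) u hh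
        rwa [hjd] at this
      have hexp : η (s + h) - η s
          = sip N u (g (s + h) - f y) - sip N u (g s - f y) + c * h * N u := by
        simp only [hη]
        ring
      rw [div_le_div_iff₀ hh hh]
      nlinarith
    · -- the error term tends to zero
      have hsl : Tendsto (fun h : ℝ => slope g s (s + h)) (𝓝[>] (0:ℝ)) (𝓝 d) := by
        have h1 : Tendsto (fun h : ℝ => s + h) (𝓝[>] (0:ℝ)) (𝓝[≠] s) := by
          rw [tendsto_nhdsWithin_iff]
          constructor
          · have : Tendsto (fun h : ℝ => s + h) (𝓝 (0:ℝ)) (𝓝 s) := by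
              simpa using (continuous_add_left s).tendsto (0:ℝ)
            exact this.mono_left nhdsWithin_le_nhds
          · filter_upwards [self_mem_nhdsWithin] with h (hh : 0 < h)
            simp only [mem_compl_iff, mem_singleton_iff]
            intro hcon
            nlinarith [add_right_cancel (a := s) (b := h) (c := 0)]
        exact (hasDerivAt_iff_tendsto_slope.mp (hdiff s)).comp h1
      have h2 : Tendsto (fun h : ℝ => N (slope g s (s + h) - d)) (𝓝[>] (0:ℝ)) (𝓝 0) := by
        have h2' : Tendsto (fun h : ℝ => slope g s (s + h) - d) (𝓝[>] (0:ℝ)) (𝓝 (d - d)) :=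
          hsl.sub tendsto_const_nhds
        rw [sub_self] at h2'
        have := (hN.continuous.tendsto 0).comp h2'
        rwa [hN.zero] at this
      refine h2.congr' ?_
      filter_upwards [self_mem_nhdsWithin] with h (hh : 0 < h)
      have heq : slope g s (s + h) - d = h⁻¹ • (g (s + h) - g s - h • d) := by
        rw [slope_def_module, add_sub_cancel_left, smul_sub, smul_sub, smul_smul,
          inv_mul_cancel₀ hh.ne', one_smul, smul_sub]
      rw [heq, hN.2.1, abs_of_pos (inv_pos.mpr hh)]
      rw [div_eq_inv_mul]
  -- apply the fencing theorem
  have hmono : ∀ s ∈ Icc (0:ℝ) 1, η s ≤ η 0 := by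
    apply image_le_of_liminf_slope_right_le_deriv_boundary (B := fun _ => η 0)
      (B' := fun _ => 0)
    · exact hηc.continuousOn
    · exact le_rfl
    · exact continuousOn_const
    · exact fun x _ => hasDerivWithinAt_const _ _ _
    · intro s _ r hr
      obtain ⟨hev, hψ⟩ := hslope s
      have hub : ∀ᶠ h in 𝓝[>] (0:ℝ), (η (s + h) - η s) / h < r := by
        filter_upwards [hev, hψ.eventually (gt_mem_nhds hr)] with h h1 h2
        exact lt_of_le_of_lt h1 h2
      refine Eventually.frequently ?_
      rw [← map_add_nhdsGT s, eventually_map]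
      filter_upwards [hub, self_mem_nhdsWithin] with h h1 (hh : 0 < h)
      rw [slope_def_field]
      simpa [add_sub_cancel_left] using h1
  have hη0 : η 0 = 0 := by
    have h00 : g 0 - f y = 0 := by simp [hg]
    show sip N u (g 0 - f y) + c * 0 * N u = 0
    rw [h00, hN.sip_zero]
    ring
  have hη1 := hmono 1 ⟨zero_le_one, le_rfl⟩
  rw [hη0] at hη1
  have hg1 : g 1 = f x := by
    have hyx : y + (1:ℝ) • u = x := by rw [one_smul, hu]; abel
    show f (y + (1:ℝ) • u) = f x
    rw [hyx]
  have hfin : sip N u (f x - f y) + c * N u ≤ 0 := by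
    have : η 1 = sip N u (f x - f y) + c * N u := by
      simp only [hη, hg1]
      ring
    linarith [this ▸ hη1]
  have := hN.neg_le_sip u (f x - f y)
  linarith

end Main

/-- Under the uniform contraction bound, `f` has exactly one zero. -/
theorem stmt_10 {n : ℕ} (N : (Fin n → ℝ) → ℝ) (hN : IsNorm N)
    (f : (Fin n → ℝ) → (Fin n → ℝ)) (hf : ContDiff ℝ 1 f)
    (c : ℝ) (hc : 0 < c) (hμ : ∀ x, matMeasure N (jac f x) ≤ -c) :
    ∃! xs : Fin n → ℝ, f xs = 0 := by
  rcases eq_or_ne n 0 with rfl | hn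
  · haveI : IsEmpty (Fin 0) := inferInstance
    exact ⟨0, Subsingleton.elim _ _, fun y _ => Subsingleton.elim _ _⟩
  obtain ⟨a, ha, hage⟩ := hN.norm_le hn
  obtain ⟨b, hb, hble⟩ := hN.le_norm
  have key := contraction hN hn hf hc hμ
  set c' : ℝ := c * a / b with hc'def
  have hc' : 0 < c' := by positivity
  have hec : ∀ x y : Fin n → ℝ, c' * ‖x - y‖ ≤ ‖f x - f y‖ := by
    intro x y
    have h1 := key x y
    have h2 := hage (x - y)
    have h3 := hble (f x - f y)
    rw [hc'def, div_mul_eq_mul_div, div_le_iff₀ hb]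
    nlinarith [norm_nonneg (x - y), norm_nonneg (f x - f y)]
  have hinj : Function.Injective f := by
    intro x y hxy
    have := hec x y
    rw [hxy, sub_self, norm_zero] at this
    have h0 : ‖x - y‖ = 0 := le_antisymm (by nlinarith [norm_nonneg (x - y)]) (norm_nonneg _)
    rw [norm_eq_zero, sub_eq_zero] at h0
    exact h0
  -- derivative is bijective everywhere
  have hbij : ∀ x₀ : Fin n → ℝ, Function.Bijective (fderiv ℝ f x₀) := by
    intro x₀
    have hker : ∀ v, fderiv ℝ f x₀ v = 0 → v = 0 := by
      intro v hv
      have h1 := hN.mulVec_lower hn (hμ x₀) v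
      rw [jac_mulVec, hv, hN.zero] at h1
      have := hN.nonneg v
      have hNv : N v = 0 := by nlinarith
      exact (hN.1 v).1 hNv
    have hlinj : Function.Injective (fderiv ℝ f x₀) := by
      intro v w hvw
      have : fderiv ℝ f x₀ (v - w) = 0 := by
        rw [map_sub, hvw, sub_self]
      have := hker _ this
      rwa [sub_eq_zero] at this
    constructor
    · exact hlinj
    · exact (LinearMap.injective_iff_surjective
        (f := (fderiv ℝ f x₀ : (Fin n → ℝ) →ₗ[ℝ] (Fin n → ℝ)))).mp hlinj
  -- range is open
  have hopen : IsOpen (range f) := by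
    rw [isOpen_iff_mem_nhds]
    rintro z ⟨x₀, rfl⟩
    set e : (Fin n → ℝ) ≃ₗ[ℝ] (Fin n → ℝ) :=
      LinearEquiv.ofBijective (fderiv ℝ f x₀ : (Fin n → ℝ) →ₗ[ℝ] (Fin n → ℝ)) (hbij x₀)
      with he
    set E : (Fin n → ℝ) ≃L[ℝ] (Fin n → ℝ) := e.toContinuousLinearEquiv with hE
    have hsd : HasStrictFDerivAt f (fderiv ℝ f x₀) x₀ :=
      (hf.contDiffAt).hasStrictFDerivAt one_ne_zero
    have hEeq : (E : (Fin n → ℝ) →L[ℝ] (Fin n → ℝ)) = fderiv ℝ f x₀ := by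
      apply ContinuousLinearMap.ext
      intro v
      rfl
    have hsd' : HasStrictFDerivAt f (E : (Fin n → ℝ) →L[ℝ] (Fin n → ℝ)) x₀ := by
      rwa [hEeq]
    have hmap := hsd'.map_nhds_eq_of_equiv
    rw [← hmap]
    rw [mem_map]
    have : f ⁻¹' (range f) = univ := by
      ext w; simp [mem_range_self]
    rw [this]
    exact univ_mem
  -- range is closed
  have hclosed : IsClosed (range f) := by
    apply isClosed_of_closure_subset
    intro z hz
    obtain ⟨w, hwmem, hwlim⟩ := mem_closure_iff_seq_limit.mp hz
    choose xk hxk using hwmem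
    have hwc : CauchySeq w := hwlim.cauchySeq
    have hxc : CauchySeq xk := by
      rw [Metric.cauchySeq_iff] at hwc ⊢
      intro ε hε
      obtain ⟨K, hK⟩ := hwc (c' * ε) (by positivity)
      refine ⟨K, fun m hm k hk => ?_⟩
      have h1 := hec (xk m) (xk k)
      have h2 := hK m hm k hk
      rw [dist_eq_norm] at h2 ⊢
      rw [← hxk m, ← hxk k] at h2
      nlinarith
    obtain ⟨x₀, hx₀⟩ := cauchySeq_tendsto_of_complete hxc
    have hfx : Tendsto (f ∘ xk) atTop (𝓝 (f x₀)) := (hf.continuous.tendsto x₀).comp hx₀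
    have hfw : (f ∘ xk) = w := funext hxk
    rw [hfw] at hfx
    exact ⟨x₀, tendsto_nhds_unique hfx hwlim⟩
  -- range is everything
  have hrange : range f = univ := by
    have hne : (range f).Nonempty := ⟨f 0, mem_range_self 0⟩
    exact IsClopen.eq_univ ⟨hclosed, hopen⟩ hne
  obtain ⟨xs, hxs⟩ : (0 : Fin n → ℝ) ∈ range f := by rw [hrange]; trivial
  exact ⟨xs, hxs, fun y hy => hinj (by rw [hy, hxs])⟩
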